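/- Fix m and an environment μ. If P is a pure learning process on μ, and μ* is any deterministic environment that is m-counterfactually equivalent to μ, then there exist constants p_{s*} ∈ [0,1] for s* ∈ S* such that P(h_t) = ∑_{s*∈S*} p_{s*} μ*(s₀ = s* | h_t) for all histories h_t of length t ≤ m. In other words, every deterministic m-counterfactually equivalent environment realizes every pure learning process. -/

import Mathlib

open scoped Classical
open Finset

/-- A POMDP without reward function ("environment"): finite sets of states, actions,
observations, a transition kernel `T`, an initial distribution `T0` and an
observation kernel `Obs`, all given as (row-)stochastic matrices of reals. -/
structure Env (S A O : Type) [Fintype S] [Fintype A] [Fintype O] where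
  T : S → A → S → ℝ
  T0 : S → ℝ
  Obs : S → O → ℝ
  T_nonneg : ∀ s a s', 0 ≤ T s a s'
  T_sum : ∀ s a, ∑ s', T s a s' = 1
  T0_nonneg : ∀ s, 0 ≤ T0 s
  T0_sum : ∑ s, T0 s = 1
  Obs_nonneg : ∀ s o, 0 ≤ Obs s o
  Obs_sum : ∀ s, ∑ o, Obs s o = 1

/-- A history `o₀a₁o₁…a_t o_t` is an initial observation together with a list of
action–observation pairs, stored in *reverse chronological order* (newest pair first). -/
abbrev Hist (A O : Type) := O × List (A × O)

/-- `HPrefix h h'` : the history `h` is an initial segment of `h'` (or equal to it). -/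
def HPrefix {A O : Type} (h h' : Hist A O) : Prop := h.1 = h'.1 ∧ h.2 <:+ h'.2

/-- A policy maps histories to probability distributions over actions. -/
structure Policy (A O : Type) [Fintype A] where
  act : Hist A O → A → ℝ
  nonneg : ∀ h a, 0 ≤ act h a
  sum_one : ∀ h, ∑ a, act h a = 1

/-- A deterministic policy: each output distribution is a point mass. -/
def Policy.IsDet {A O : Type} [Fintype A] (π : Policy A O) : Prop :=
  ∀ h, ∃ a, ∀ a', π.act h a' = if a' = a then 1 else 0

variable {S S' S'' A O : Type}

/-- Joint probability of a history together with the final state: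
`histStateProb μ π o₀ l s` is the probability under `μ` and `π` of seeing the history
`(o₀, l)` and the state after the last observation being `s`. -/
noncomputable def histStateProb [Fintype S] [Fintype A] [Fintype O]
    (μ : Env S A O) (π : Policy A O) (o0 : O) : List (A × O) → S → ℝ
  | [], s => μ.T0 s * μ.Obs s o0
  | (a, o) :: rest, s =>
      π.act (o0, rest) a * (∑ s', histStateProb μ π o0 rest s' * μ.T s' a s) * μ.Obs s o

/-- `μ(h | π)`: the probability of the history `h` under policy `π`:
`μ(o₀a₁o₁…a_t o_t | π) = ∑_{s₀…s_t} T₀(s₀)Obs(o₀|s₀)∏_k Obs(o_k|s_k)T(s_k|s_{k-1},a_k)π(a_k|…)`. -/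
noncomputable def histProb [Fintype S] [Fintype A] [Fintype O]
    (μ : Env S A O) (π : Policy A O) (h : Hist A O) : ℝ :=
  ∑ s, histStateProb μ π h.1 h.2 s

/-- `μ(h' | h, π)`: conditional probability of a history given another, via Bayes' rule;
set to `0` when `h` is not an initial segment of `h'` or the conditioning event has
probability `0`. -/
noncomputable def condProb [Fintype S] [Fintype A] [Fintype O]
    (μ : Env S A O) (π : Policy A O) (h h' : Hist A O) : ℝ :=
  if HPrefix h h' ∧ histProb μ π h ≠ 0 then histProb μ π h' / histProb μ π h else 0

/-- `m`-equivalence: all conditional probabilities of histories of length `≤ m`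
coincide, for all policies. -/
def MEquiv [Fintype S] [Fintype S'] [Fintype A] [Fintype O]
    (μ : Env S A O) (μ' : Env S' A O) (m : ℕ) : Prop :=
  ∀ (π : Policy A O) (h h' : Hist A O), h.2.length ≤ m → h'.2.length ≤ m →
    condProb μ π h h' = condProb μ' π h h'

/-- A deterministic environment policy of length `m`: a triple `(T̂₀, T̂, Ô)` with
`T̂₀ ∈ S`, `T̂ : S × A × {1,…,m} → S` (here `Fin m` with value `i` standing for turn `i+1`)
and `Ô : S × {0,…,m} → O`. -/
abbrev EnvPol (S A O : Type) (m : ℕ) := S × (S → A → Fin m → S) × (S → Fin (m + 1) → O)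

/-- `μ(π_μ) = T₀(T̂₀) ⬝ ∏_{s,a,i} T(T̂(s,a,i)|s,a) ⬝ ∏_{s,i} Obs(Ô(s,i)|s)`. -/
noncomputable def envPolProb [Fintype S] [Fintype A] [Fintype O]
    (μ : Env S A O) {m : ℕ} (ep : EnvPol S A O m) : ℝ :=
  μ.T0 ep.1 *
    ((∏ s, ∏ a, ∏ i, μ.T s a (ep.2.1 s a i)) * ∏ s, ∏ i, μ.Obs s (ep.2.2 s i))

/-- The state reached by following the environment policy `ep` along the actions of the
(reverse chronological) action–observation list: `s₀ = T̂₀`, `s_k = T̂(s_{k-1}, a_k, k)`. -/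
def epState {m : ℕ} (ep : EnvPol S A O m) : List (A × O) → S
  | [] => ep.1
  | (a, _) :: rest =>
      if h : rest.length < m then ep.2.1 (epState ep rest) a ⟨rest.length, h⟩
      else epState ep rest

/-- `μ(h | π_μ, π)`: the probability of the history `h = (o₀, l)` when the dynamics are
determined by the environment policy `ep` and the actions are drawn from `π`; it is
`∏_k π(a_k | h_{k-1})` if the observations of `h` match those generated by `ep` along the
actions of `h`, and `0` otherwise. -/
noncomputable def epHistProb {m : ℕ} [Fintype A] (ep : EnvPol S A O m) (π : Policy A O)
    (o0 : O) : List (A × O) → ℝ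
  | [] => if ep.2.2 ep.1 0 = o0 then 1 else 0
  | (a, o) :: rest =>
      epHistProb ep π o0 rest * π.act (o0, rest) a *
        (if h : rest.length < m then
          (if ep.2.2 (ep.2.1 (epState ep rest) a ⟨rest.length, h⟩)
              ⟨rest.length + 1, by omega⟩ = o then 1 else 0)
         else 0)

/-- `m`-counterfactual equivalence: for every finite collection `(h_{t_i}, π_i)` of
history–policy pairs with all `t_i ≤ m`,
`∑_{π_μ} μ(π_μ) ∏_i μ(h_{t_i}|π_μ,π_i) = ∑_{π_{μ'}} μ'(π_{μ'}) ∏_i μ'(h_{t_i}|π_{μ'},π_i)`. -/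
def MCounterEquiv [Fintype S] [DecidableEq S] [Fintype S'] [DecidableEq S']
    [Fintype A] [DecidableEq A] [Fintype O]
    (μ : Env S A O) (μ' : Env S' A O) (m : ℕ) : Prop :=
  ∀ (n : ℕ) (hs : Fin n → Hist A O) (πs : Fin n → Policy A O),
    (∀ i, (hs i).2.length ≤ m) →
    (∑ ep : EnvPol S A O m, envPolProb μ ep * ∏ i, epHistProb ep (πs i) (hs i).1 (hs i).2)
      = ∑ ep : EnvPol S' A O m, envPolProb μ' ep * ∏ i, epHistProb ep (πs i) (hs i).1 (hs i).2

/-- A deterministic environment: every transition and observation distribution is a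
point mass. -/
def IsDetEnv [Fintype S] [Fintype A] [Fintype O] (μ : Env S A O) : Prop :=
  (∀ s a, ∃ s', ∀ s'', μ.T s a s'' = if s'' = s' then 1 else 0) ∧
  (∀ s, ∃ o, ∀ o', μ.Obs s o' = if o' = o then 1 else 0)

/-- `μ(h | s₀ = s, π)` (probability of the history conditional on the initial state),
with the final state summed out below. -/
noncomputable def histStateProbFrom [Fintype S] [Fintype A] [Fintype O]
    (μ : Env S A O) (π : Policy A O) (s0 : S) (o0 : O) : List (A × O) → S → ℝ
  | [], s => (if s = s0 then 1 else 0) * μ.Obs s o0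
  | (a, o) :: rest, s =>
      π.act (o0, rest) a *
        (∑ s', histStateProbFrom μ π s0 o0 rest s' * μ.T s' a s) * μ.Obs s o

/-- `μ(h | s₀ = s, π)`. -/
noncomputable def histProbFrom [Fintype S] [Fintype A] [Fintype O]
    (μ : Env S A O) (π : Policy A O) (s0 : S) (h : Hist A O) : ℝ :=
  ∑ s, histStateProbFrom μ π s0 h.1 h.2 s

/-- The posterior `μ(s₀ = s | h)` over the initial state given a history, computed by
Bayes' rule from any policy `π` with `μ(h|π) > 0` (it is independent of the choice of
such a policy), and set to `0` if no such policy exists. -/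
noncomputable def posterior [Fintype S] [Fintype A] [Fintype O]
    (μ : Env S A O) (h : Hist A O) (s : S) : ℝ :=
  if hex : ∃ π : Policy A O, 0 < histProb μ π h then
    μ.T0 s * histProbFrom μ hex.choose s h /
      ∑ s', μ.T0 s' * histProbFrom μ hex.choose s' h
  else 0

/-- Given `m`, a pure learning process on `μ` is a map `P` from histories of length `≤ m`
to `[0,1]` realized, on some deterministic environment `μ'` that is `m`-counterfactually
equivalent to `μ`, as `P(h) = ∑_{s'} p_{s'} μ'(s₀ = s' | h)` for constants `p_{s'} ∈ [0,1]`. -/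
def IsPureLearning [Fintype S] [DecidableEq S] [Fintype A] [DecidableEq A] [Fintype O]
    (μ : Env S A O) (m : ℕ) (P : Hist A O → ℝ) : Prop :=
  (∀ h : Hist A O, h.2.length ≤ m → P h ∈ Set.Icc (0 : ℝ) 1) ∧
  ∃ (S' : Type) (_ : Fintype S') (_ : DecidableEq S') (μ' : Env S' A O) (p : S' → ℝ),
    IsDetEnv μ' ∧ MCounterEquiv μ μ' m ∧ (∀ s', p s' ∈ Set.Icc (0 : ℝ) 1) ∧
    ∀ h : Hist A O, h.2.length ≤ m → P h = ∑ s', p s' * posterior μ' h s'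

/-- First components: the history (in reverse chronological order) generated after `t`
turns in a deterministic environment given by functions `(Td, Od)`, starting from state
`s0` and following the deterministic policy `p`; second component: the state reached. -/
def genHistAux (Td : S → A → S) (Od : S → O) (p : Hist A O → A) (s0 : S) :
    ℕ → List (A × O) × S
  | 0 => ([], s0)
  | t + 1 =>
      let r := genHistAux Td Od p s0 t
      let a := p (Od s0, r.1)
      let s' := Td r.2 a
      ((a, Od s') :: r.1, s')

/-- `f_{s0}(p)` truncated at length `t`: the unique history of length `t` generated from
the initial state `s0` by the deterministic policy `p` in the deterministic environment
given by the functions `(Td, Od)`. -/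
def genHist (Td : S → A → S) (Od : S → O) (p : Hist A O → A) (s0 : S) (t : ℕ) :
    Hist A O :=
  (Od s0, (genHistAux Td Od p s0 t).1)

/-- The fiber `F(f_s)` (for `s` a state of the deterministic environment `(Td', Od')`):
all initial states `s0` of the deterministic environment `(Td, Od)` whose generated-history
map `f_{s0} : Π₀ → H_m` equals `f_s`. -/
noncomputable def fiber [Fintype S] (Td : S → A → S) (Od : S → O)
    (Td' : S' → A → S') (Od' : S' → O) (m : ℕ) (s : S') : Finset S :=
  Finset.univ.filter fun s0 => ∀ p : Hist A O → A, genHist Td Od p s0 m = genHist Td' Od' p s m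


/- ------------------------------------------------------------------ -/
/- Auxiliary development                                               -/
/- ------------------------------------------------------------------ -/

namespace PLU

variable {S S2 A O : Type}

/-- State reached after performing the actions of the (reverse-chronological) list. -/
def runSt (Td : S → A → S) (s0 : S) : List (A × O) → S
  | [] => s0
  | (a, _) :: rest => Td (runSt Td s0 rest) a

/-- The history `(o0, l)` is consistent with starting state `s0` in the deterministic
environment `(Td, Od)`. -/
def Consist (Td : S → A → S) (Od : S → O) (s0 : S) (o0 : O) : List (A × O) → Prop
  | [] => Od s0 = o0
  | (a, o) :: rest => Consist Td Od s0 o0 rest ∧ Od (Td (runSt Td s0 rest) a) = o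

/-- Probability of the actions of a history under a policy. -/
noncomputable def actProb [Fintype A] (π : Policy A O) (o0 : O) : List (A × O) → ℝ
  | [] => 1
  | (a, _) :: rest => actProb π o0 rest * π.act (o0, rest) a

/-- The actions of the history follow the deterministic policy `q`. -/
def Follows (q : Hist A O → A) (o0 : O) : List (A × O) → Prop
  | [] => True
  | (a, _) :: rest => Follows q o0 rest ∧ q (o0, rest) = a

theorem actProb_nonneg [Fintype A] (π : Policy A O) (o0 : O) (l : List (A × O)) :
    0 ≤ actProb π o0 l := by
  induction l with
  | nil => exact zero_le_one
  | cons x rest ih => exact mul_nonneg ih (π.nonneg _ _)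

theorem histStateProb_eq_sum [Fintype S] [Fintype A] [Fintype O] (μ : Env S A O)
    (π : Policy A O) (o0 : O) (l : List (A × O)) (s : S) :
    histStateProb μ π o0 l s = ∑ s0, μ.T0 s0 * histStateProbFrom μ π s0 o0 l s := by
  induction l generalizing s with
  | nil =>
    simp only [histStateProb, histStateProbFrom, ← mul_assoc, mul_ite, mul_one, mul_zero,
      ite_mul, zero_mul]
    simp [Finset.sum_ite_eq]
  | cons x rest ih =>
    obtain ⟨a, o⟩ := x
    simp only [histStateProb, histStateProbFrom, ih, Finset.sum_mul, Finset.mul_sum]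
    rw [Finset.sum_comm]
    refine Finset.sum_congr rfl fun s0 _ => Finset.sum_congr rfl fun s' _ => by ring

theorem histProb_eq_sum [Fintype S] [Fintype A] [Fintype O] (μ : Env S A O)
    (π : Policy A O) (h : Hist A O) :
    histProb μ π h = ∑ s0, μ.T0 s0 * histProbFrom μ π s0 h := by
  simp only [histProb, histProbFrom, histStateProb_eq_sum, Finset.mul_sum]
  exact Finset.sum_comm

theorem histStateProbFrom_det [Fintype S] [Fintype A] [Fintype O] (μ : Env S A O)
    (Td : S → A → S) (Od : S → O)
    (hT : ∀ s a s'', μ.T s a s'' = if s'' = Td s a then 1 else 0)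
    (hO : ∀ s o', μ.Obs s o' = if o' = Od s then 1 else 0)
    (π : Policy A O) (s0 : S) (o0 : O) (l : List (A × O)) (s : S) :
    histStateProbFrom μ π s0 o0 l s
      = actProb π o0 l * if Consist Td Od s0 o0 l ∧ s = runSt Td s0 l then 1 else 0 := by
  induction l generalizing s with
  | nil =>
    simp only [histStateProbFrom, actProb, hO, Consist, runSt, one_mul]
    by_cases h1 : s = s0 <;> by_cases h2 : Od s0 = o0 <;>
      simp only [h1, h2, if_true, if_false, and_true, and_false, true_and, false_and] <;>
      simp_all [eq_comm]
  | cons x rest ih =>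
    obtain ⟨a, o⟩ := x
    simp only [histStateProbFrom, actProb, hT, hO, ih, Consist, runSt]
    rcases Classical.em (Consist Td Od s0 o0 rest) with hc | hc
    · rw [Finset.sum_eq_single (runSt Td s0 rest)]
      · by_cases h1 : s = Td (runSt Td s0 rest) a <;>
          by_cases h2 : o = Od s <;>
          simp_all [eq_comm] <;> ring
      · intro b _ hb
        simp [hb, hc]
      · intro hmem; exact absurd (Finset.mem_univ _) hmem
    · simp [hc]

theorem histProbFrom_det [Fintype S] [Fintype A] [Fintype O] (μ : Env S A O)
    (Td : S → A → S) (Od : S → O)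
    (hT : ∀ s a s'', μ.T s a s'' = if s'' = Td s a then 1 else 0)
    (hO : ∀ s o', μ.Obs s o' = if o' = Od s then 1 else 0)
    (π : Policy A O) (s0 : S) (h : Hist A O) :
    histProbFrom μ π s0 h
      = actProb π h.1 h.2 * if Consist Td Od s0 h.1 h.2 then 1 else 0 := by
  rw [histProbFrom]
  simp only [histStateProbFrom_det μ Td Od hT hO π]
  rcases Classical.em (Consist Td Od s0 h.1 h.2) with hc | hc
  · rw [Finset.sum_eq_single (runSt Td s0 h.2)] <;> simp_all
  · simp [hc]

/-- Total `T0`-mass of states consistent with a history. -/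
noncomputable def massC [Fintype S] [Fintype A] [Fintype O] (μ : Env S A O)
    (Td : S → A → S) (Od : S → O) (h : Hist A O) : ℝ :=
  ∑ s0, μ.T0 s0 * if Consist Td Od s0 h.1 h.2 then 1 else 0

theorem massC_nonneg [Fintype S] [Fintype A] [Fintype O] (μ : Env S A O)
    (Td : S → A → S) (Od : S → O) (h : Hist A O) : 0 ≤ massC μ Td Od h :=
  Finset.sum_nonneg fun s0 _ => mul_nonneg (μ.T0_nonneg s0) (by positivity)

theorem histProb_det [Fintype S] [Fintype A] [Fintype O] (μ : Env S A O)
    (Td : S → A → S) (Od : S → O)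
    (hT : ∀ s a s'', μ.T s a s'' = if s'' = Td s a then 1 else 0)
    (hO : ∀ s o', μ.Obs s o' = if o' = Od s then 1 else 0)
    (π : Policy A O) (h : Hist A O) :
    histProb μ π h = actProb π h.1 h.2 * massC μ Td Od h := by
  rw [histProb_eq_sum, massC, Finset.mul_sum]
  exact Finset.sum_congr rfl fun s0 _ => by
    rw [histProbFrom_det μ Td Od hT hO]; ring

noncomputable def unifPol [Fintype A] [Nonempty A] : Policy A O where
  act _ _ := (Fintype.card A : ℝ)⁻¹
  nonneg _ _ := by positivity
  sum_one _ := by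
    rw [Finset.sum_const, Finset.card_univ, nsmul_eq_mul]
    rw [mul_inv_cancel₀]
    exact_mod_cast Fintype.card_ne_zero

theorem actProb_unif_pos [Fintype A] [Nonempty A] (o0 : O) (l : List (A × O)) :
    0 < actProb (unifPol : Policy A O) o0 l := by
  induction l with
  | nil => exact zero_lt_one
  | cons x rest ih =>
    refine mul_pos ih ?_
    show (0 : ℝ) < (Fintype.card A : ℝ)⁻¹
    have : (0 : ℝ) < (Fintype.card A : ℝ) := by exact_mod_cast Fintype.card_pos
    positivity

theorem exists_pos_iff_massC [Fintype S] [Fintype A] [Fintype O] [Nonempty A] (μ : Env S A O)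
    (Td : S → A → S) (Od : S → O)
    (hT : ∀ s a s'', μ.T s a s'' = if s'' = Td s a then 1 else 0)
    (hO : ∀ s o', μ.Obs s o' = if o' = Od s then 1 else 0)
    (h : Hist A O) :
    (∃ π : Policy A O, 0 < histProb μ π h) ↔ 0 < massC μ Td Od h := by
  constructor
  · rintro ⟨π, hπ⟩
    rw [histProb_det μ Td Od hT hO] at hπ
    rcases lt_or_eq_of_le (massC_nonneg μ Td Od h) with h' | h'
    · exact h'
    · rw [← h', mul_zero] at hπ; exact absurd hπ (lt_irrefl 0)
  · intro hm
    exact ⟨unifPol, by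
      rw [histProb_det μ Td Od hT hO]
      exact mul_pos (actProb_unif_pos h.1 h.2) hm⟩

theorem posterior_zero [Fintype S] [Fintype A] [Fintype O] (μ : Env S A O)
    (h : Hist A O) (s : S) (hno : ¬∃ π : Policy A O, 0 < histProb μ π h) :
    posterior μ h s = 0 := by
  rw [posterior, dif_neg hno]

theorem posterior_det [Fintype S] [Fintype A] [Fintype O] [Nonempty A] (μ : Env S A O)
    (Td : S → A → S) (Od : S → O)
    (hT : ∀ s a s'', μ.T s a s'' = if s'' = Td s a then 1 else 0)
    (hO : ∀ s o', μ.Obs s o' = if o' = Od s then 1 else 0)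
    (h : Hist A O) (hm : 0 < massC μ Td Od h) (s : S) :
    posterior μ h s
      = μ.T0 s * (if Consist Td Od s h.1 h.2 then 1 else 0) / massC μ Td Od h := by
  have hex : ∃ π : Policy A O, 0 < histProb μ π h :=
    (exists_pos_iff_massC μ Td Od hT hO h).2 hm
  rw [posterior, dif_pos hex]
  have hπ : 0 < histProb μ hex.choose h := hex.choose_spec
  rw [histProb_det μ Td Od hT hO] at hπ
  have hAP : 0 < actProb hex.choose h.1 h.2 := by
    rcases lt_or_eq_of_le (actProb_nonneg hex.choose h.1 h.2) with h' | h'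
    · exact h'
    · rw [← h', zero_mul] at hπ; exact absurd hπ (lt_irrefl 0)
  have hd : ∑ s', μ.T0 s' * histProbFrom μ hex.choose s' h
      = actProb hex.choose h.1 h.2 * massC μ Td Od h := by
    rw [massC, Finset.mul_sum]
    exact Finset.sum_congr rfl fun s0 _ => by
      rw [histProbFrom_det μ Td Od hT hO]; ring
  rw [hd, histProbFrom_det μ Td Od hT hO]
  rw [div_eq_div_iff (by positivity) hm.ne']
  ring

theorem ind_mul_ind (P Q : Prop) :
    (if P then (1 : ℝ) else 0) * (if Q then 1 else 0) = if P ∧ Q then 1 else 0 := by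
  by_cases hP : P <;> by_cases hQ : Q <;> simp [hP, hQ]

theorem prod_ind {ι : Type} [Fintype ι] (R : ι → Prop) [DecidablePred R]
    [Decidable (∀ i, R i)] :
    (∏ i, if R i then (1 : ℝ) else 0) = if ∀ i, R i then 1 else 0 := by
  by_cases h : ∀ i, R i
  · rw [if_pos h]; exact Finset.prod_eq_one fun i _ => if_pos (h i)
  · rw [if_neg h]
    push_neg at h
    obtain ⟨i, hi⟩ := h
    exact Finset.prod_eq_zero (Finset.mem_univ i) (if_neg hi)

noncomputable def detPol [Fintype A] (q : Hist A O → A) : Policy A O where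
  act h a := if a = q h then 1 else 0
  nonneg h a := by split <;> norm_num
  sum_one h := by simp

theorem actProb_detPol [Fintype A] (q : Hist A O → A) (o0 : O) (l : List (A × O)) :
    actProb (detPol q) o0 l = if Follows q o0 l then 1 else 0 := by
  induction l with
  | nil => simp [actProb, Follows]
  | cons x rest ih =>
    obtain ⟨a, o⟩ := x
    rw [actProb, ih]
    have hact : (detPol q).act (o0, rest) a = if a = q (o0, rest) then (1:ℝ) else 0 := rfl
    rw [hact]
    by_cases h2 : q (o0, rest) = a
    · by_cases h1 : Follows q o0 rest <;> simp [Follows, h1, h2]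
    · rw [if_neg (fun he : a = q (o0, rest) => h2 he.symm)]
      by_cases h1 : Follows q o0 rest <;> simp [Follows, h1, h2]

/-- The canonical environment policy of a deterministic environment. -/
def epc (Td : S → A → S) (Od : S → O) (m : ℕ) (s0 : S) : EnvPol S A O m :=
  (s0, fun s a _ => Td s a, fun s _ => Od s)

set_option maxHeartbeats 1000000 in
theorem sum_envPol_det [Fintype S] [DecidableEq S] [Fintype A] [DecidableEq A]
    [Fintype O] (μ : Env S A O)
    (Td : S → A → S) (Od : S → O)
    (hT : ∀ s a s'', μ.T s a s'' = @ite ℝ (s'' = Td s a) (Classical.propDecidable _) 1 0)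
    (hO : ∀ s o', μ.Obs s o' = @ite ℝ (o' = Od s) (Classical.propDecidable _) 1 0)
    (m : ℕ) (G : EnvPol S A O m → ℝ) :
    ∑ ep : EnvPol S A O m, envPolProb μ ep * G ep = ∑ s0, μ.T0 s0 * G (epc Td Od m s0) := by
  rw [Fintype.sum_prod_type]
  refine Finset.sum_congr rfl fun s0 _ => ?_
  rw [Fintype.sum_prod_type]
  have key : ∀ (Th : S → A → Fin m → S) (Oh : S → Fin (m+1) → O),
      envPolProb μ (s0, Th, Oh)
        = μ.T0 s0 * ((if Th = (fun s a _ => Td s a) then (1:ℝ) else 0) *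
            (if Oh = (fun s _ => Od s) then 1 else 0)) := by
    intro Th Oh
    rw [envPolProb]
    congr 1
    congr 1
    · calc (∏ s, ∏ a, ∏ i, μ.T s a (Th s a i))
          = ∏ s, ∏ a, ∏ i : Fin m,
              @ite ℝ (Th s a i = Td s a) (Classical.propDecidable _) 1 0 :=
            Finset.prod_congr rfl fun s _ => Finset.prod_congr rfl fun a _ =>
              Finset.prod_congr rfl fun i _ => hT s a (Th s a i)
        _ = if Th = (fun s a _ => Td s a) then 1 else 0 := by
            by_cases hh : Th = (fun s a _ => Td s a)
            · rw [if_pos hh]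
              refine Finset.prod_eq_one fun s _ => Finset.prod_eq_one fun a _ =>
                Finset.prod_eq_one fun i _ => if_pos (by rw [hh])
            · rw [if_neg hh]
              have hex : ∃ s a i, Th s a i ≠ Td s a := by
                by_contra hc
                push_neg at hc
                exact hh (funext fun s => funext fun a => funext fun i => hc s a i)
              obtain ⟨s, a, i, hi⟩ := hex
              refine Finset.prod_eq_zero (Finset.mem_univ s) ?_
              refine Finset.prod_eq_zero (Finset.mem_univ a) ?_
              exact Finset.prod_eq_zero (Finset.mem_univ i) (if_neg hi)
    · calc (∏ s, ∏ i, μ.Obs s (Oh s i))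
          = ∏ s, ∏ i : Fin (m+1),
              @ite ℝ (Oh s i = Od s) (Classical.propDecidable _) 1 0 :=
            Finset.prod_congr rfl fun s _ =>
              Finset.prod_congr rfl fun i _ => hO s (Oh s i)
        _ = if Oh = (fun s _ => Od s) then 1 else 0 := by
            by_cases hh : Oh = (fun s _ => Od s)
            · rw [if_pos hh]
              refine Finset.prod_eq_one fun s _ =>
                Finset.prod_eq_one fun i _ => if_pos (by rw [hh])
            · rw [if_neg hh]
              have hex : ∃ s i, Oh s i ≠ Od s := by
                by_contra hc
                push_neg at hc
                exact hh (funext fun s => funext fun i => hc s i)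
              obtain ⟨s, i, hi⟩ := hex
              refine Finset.prod_eq_zero (Finset.mem_univ s) ?_
              exact Finset.prod_eq_zero (Finset.mem_univ i) (if_neg hi)
  calc (∑ Th, ∑ Oh, envPolProb μ (s0, Th, Oh) * G (s0, Th, Oh))
      = ∑ Th, ∑ Oh, (if Th = (fun s a _ => Td s a) then
          (if Oh = (fun s _ => Od s) then μ.T0 s0 * G (s0, Th, Oh) else 0) else 0) := by
        refine Finset.sum_congr rfl fun Th _ => Finset.sum_congr rfl fun Oh _ => ?_
        rw [key Th Oh]
        by_cases h1 : Th = (fun s a _ => Td s a) <;>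
          by_cases h2 : Oh = (fun s _ => Od s) <;> simp [h1, h2] <;> try ring
    _ = μ.T0 s0 * G (epc Td Od m s0) := by
        rw [Finset.sum_eq_single (fun s a _ => Td s a : S → A → Fin m → S)]
        · rw [Finset.sum_eq_single (fun s _ => Od s : S → Fin (m+1) → O)]
          · simp [epc]
          · intro b _ hb; simp [hb]
          · intro hmem; exact absurd (Finset.mem_univ _) hmem
        · intro b _ hb; simp [hb]
        · intro hmem; exact absurd (Finset.mem_univ _) hmem

theorem epState_epc {m : ℕ} (Td : S → A → S) (Od : S → O) (s0 : S)
    (l : List (A × O)) (hl : l.length ≤ m) :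
    epState (epc Td Od m s0) l = runSt Td s0 l := by
  induction l with
  | nil => rfl
  | cons x rest ih =>
    obtain ⟨a, o⟩ := x
    have hlt : rest.length < m := by
      simp only [List.length_cons] at hl; omega
    rw [epState, dif_pos hlt, ih hlt.le]
    rfl

theorem epHistProb_epc [Fintype A] {m : ℕ} (Td : S → A → S) (Od : S → O) (s0 : S)
    (π : Policy A O) (o0 : O) (l : List (A × O)) (hl : l.length ≤ m) :
    epHistProb (epc Td Od m s0) π o0 l
      = actProb π o0 l * if Consist Td Od s0 o0 l then 1 else 0 := by
  induction l with
  | nil =>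
    show (if Od s0 = o0 then (1:ℝ) else 0) = 1 * if Consist Td Od s0 o0 [] then 1 else 0
    rw [one_mul]
    by_cases hc : Od s0 = o0 <;> simp [Consist, hc]
  | cons x rest ih =>
    obtain ⟨a, o⟩ := x
    have hlt : rest.length < m := by
      simp only [List.length_cons] at hl; omega
    rw [epHistProb, dif_pos hlt, ih hlt.le, epState_epc Td Od s0 rest hlt.le]
    show actProb π o0 rest * (if Consist Td Od s0 o0 rest then (1:ℝ) else 0) * π.act (o0, rest) a *
        (if Od (Td (runSt Td s0 rest) a) = o then (1:ℝ) else 0) = _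
    rw [actProb]
    simp only [Consist]
    by_cases h1 : Consist Td Od s0 o0 rest <;>
      by_cases h2 : Od (Td (runSt Td s0 rest) a) = o <;>
      simp [h1, h2] <;> try ring

theorem ce_sum_det [Fintype S] [DecidableEq S] [Fintype A] [DecidableEq A]
    [Fintype O] (μ : Env S A O)
    (Td : S → A → S) (Od : S → O)
    (hT : ∀ s a s'', μ.T s a s'' = @ite ℝ (s'' = Td s a) (Classical.propDecidable _) 1 0)
    (hO : ∀ s o', μ.Obs s o' = @ite ℝ (o' = Od s) (Classical.propDecidable _) 1 0)
    (m : ℕ) (n : ℕ) (hs : Fin n → Hist A O) (πs : Fin n → Policy A O)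
    (hlen : ∀ i, (hs i).2.length ≤ m) :
    ∑ ep : EnvPol S A O m, envPolProb μ ep * ∏ i, epHistProb ep (πs i) (hs i).1 (hs i).2
      = ∑ s0, μ.T0 s0 * ∏ i, (actProb (πs i) (hs i).1 (hs i).2 *
          if Consist Td Od s0 (hs i).1 (hs i).2 then 1 else 0) := by
  rw [sum_envPol_det μ Td Od hT hO m]
  refine Finset.sum_congr rfl fun s0 _ => ?_
  congr 1
  exact Finset.prod_congr rfl fun i _ => epHistProb_epc Td Od s0 (πs i) (hs i).1 (hs i).2 (hlen i)

theorem genHistAux_length (Td : S → A → S) (Od : S → O) (q : Hist A O → A) (s : S) :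
    ∀ t, (genHistAux Td Od q s t).1.length = t := by
  intro t
  induction t with
  | zero => rfl
  | succ t ih => simp [genHistAux, ih]

theorem genHistAux_snd (Td : S → A → S) (Od : S → O) (q : Hist A O → A) (s : S) (t : ℕ) :
    (genHistAux Td Od q s t).2 = runSt Td s (genHistAux Td Od q s t).1 := by
  induction t with
  | zero => rfl
  | succ t ih => simp [genHistAux, runSt, ih]

theorem genHistAux_drop (Td : S → A → S) (Od : S → O) (q : Hist A O → A) (s : S)
    {t u : ℕ} (h : t ≤ u) :
    (genHistAux Td Od q s t).1 = ((genHistAux Td Od q s u).1).drop (u - t) := by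
  induction u with
  | zero =>
    have : t = 0 := Nat.le_zero.mp h
    subst this; rfl
  | succ u ih =>
    rcases Nat.eq_or_lt_of_le h with rfl | h'
    · simp
    · have ht : t ≤ u := Nat.lt_succ_iff.mp h'
      rw [ih ht]
      have he : u + 1 - t = (u - t) + 1 := by omega
      rw [he]
      rfl

theorem cons_follows_iff (Td : S → A → S) (Od : S → O) (q : Hist A O → A) (s : S)
    (o0 : O) (l : List (A × O)) :
    (Consist Td Od s o0 l ∧ Follows q o0 l)
      ↔ (Od s = o0 ∧ (genHistAux Td Od q s l.length).1 = l) := by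
  induction l with
  | nil => simp [Consist, Follows, genHistAux]
  | cons x rest ih =>
    obtain ⟨a, o⟩ := x
    constructor
    · rintro ⟨⟨hc, ho⟩, hf, hq⟩
      obtain ⟨h1, h2⟩ := ih.mp ⟨hc, hf⟩
      refine ⟨h1, ?_⟩
      show (genHistAux Td Od q s (rest.length + 1)).1 = (a, o) :: rest
      simp only [genHistAux]
      rw [genHistAux_snd, h2]
      have hact : q (Od s, rest) = a := by rw [h1]; exact hq
      rw [hact, ho]
    · rintro ⟨h1, h2⟩
      simp only [List.length_cons, genHistAux] at h2
      rw [genHistAux_snd] at h2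
      have htl : (genHistAux Td Od q s rest.length).1 = rest := by
        have := congrArg List.tail h2
        simpa using this
      rw [htl] at h2
      have hact : q (Od s, rest) = a := (Prod.mk.injEq _ _ _ _).mp (List.head_eq_of_cons_eq h2) |>.1
      have hobs : Od (Td (runSt Td s rest) (q (Od s, rest))) = o :=
        (Prod.mk.injEq _ _ _ _).mp (List.head_eq_of_cons_eq h2) |>.2
      obtain ⟨hc, hf⟩ := ih.mpr ⟨h1, htl⟩
      refine ⟨⟨hc, ?_⟩, hf, ?_⟩
      · rw [← hact]; exact hobs
      · rw [← h1]; exact hact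

def qOf (as : ℕ → A) : Hist A O → A := fun h => as h.2.length

theorem genHistAux_qOf_congr (Td : S → A → S) (Od : S → O) (s : S) {as as' : ℕ → A}
    (t : ℕ) (h : ∀ k < t, as k = as' k) :
    genHistAux Td Od (qOf as) s t = genHistAux Td Od (qOf as') s t := by
  induction t with
  | zero => rfl
  | succ t ih =>
    have e := ih (fun k hk => h k (hk.trans (Nat.lt_succ_self t)))
    simp only [genHistAux, e]
    have hq : qOf as (Od s, (genHistAux Td Od (qOf as') s t).1)
        = qOf as' (Od s, (genHistAux Td Od (qOf as') s t).1) := by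
      show as (genHistAux Td Od (qOf as') s t).1.length = as' (genHistAux Td Od (qOf as') s t).1.length
      rw [genHistAux_length]
      exact h t (Nat.lt_succ_self t)
    rw [hq]

theorem genHistAux_traj (Td : S → A → S) (Od : S → O) (q : Hist A O → A) (s : S) (t : ℕ) :
    genHistAux Td Od (qOf (fun k => q (Od s, (genHistAux Td Od q s k).1))) s t
      = genHistAux Td Od q s t := by
  induction t with
  | zero => rfl
  | succ t ih =>
    simp only [genHistAux, ih]
    have hq : qOf (fun k => q (Od s, (genHistAux Td Od q s k).1))
          (Od s, (genHistAux Td Od q s t).1)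
        = q (Od s, (genHistAux Td Od q s t).1) := by
      show q (Od s, (genHistAux Td Od q s (genHistAux Td Od q s t).1.length).1) = _
      rw [genHistAux_length]
    rw [hq]

theorem gen_eq_of_qOf [Nonempty A] (Td : S → A → S) (Od : S → O)
    (Td2 : S2 → A → S2) (Od2 : S2 → O) (m : ℕ) (s1 : S) (s2 : S2)
    (H : ∀ as : ℕ → A, genHist Td Od (qOf as) s1 m = genHist Td2 Od2 (qOf as) s2 m) :
    ∀ q, genHist Td Od q s1 m = genHist Td2 Od2 q s2 m := by
  have hOd : Od s1 = Od2 s2 :=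
    congrArg Prod.fst (H fun _ => Classical.arbitrary A)
  have main : ∀ t, t ≤ m → ∀ q : Hist A O → A,
      (genHistAux Td Od q s1 t).1 = (genHistAux Td2 Od2 q s2 t).1 := by
    intro t
    induction t with
    | zero => intro _ _; rfl
    | succ t ih =>
      intro htm q
      have htm' : t ≤ m := Nat.le_of_succ_le htm
      set as : ℕ → A := fun k => q (Od s1, (genHistAux Td Od q s1 k).1) with has
      have e1 : genHistAux Td Od (qOf as) s1 (t+1) = genHistAux Td Od q s1 (t+1) :=
        genHistAux_traj Td Od q s1 (t+1)
      have e2 : (genHistAux Td Od (qOf as) s1 (t+1)).1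
          = (genHistAux Td2 Od2 (qOf as) s2 (t+1)).1 := by
        have hm : (genHistAux Td Od (qOf as) s1 m).1 = (genHistAux Td2 Od2 (qOf as) s2 m).1 :=
          congrArg Prod.snd (H as)
        rw [genHistAux_drop Td Od (qOf as) s1 htm, genHistAux_drop Td2 Od2 (qOf as) s2 htm, hm]
      have e3 : genHistAux Td2 Od2 (qOf as) s2 (t+1) = genHistAux Td2 Od2 q s2 (t+1) := by
        have sub : ∀ k, k ≤ t + 1 → genHistAux Td2 Od2 (qOf as) s2 k = genHistAux Td2 Od2 q s2 k := by
          intro k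
          induction k with
          | zero => intro _; rfl
          | succ k ihk =>
            intro hk
            have hk' : k ≤ t := Nat.lt_succ_iff.mp hk
            have ek := ihk (Nat.le_succ_of_le hk')
            simp only [genHistAux, ek]
            have hl : (genHistAux Td Od q s1 k).1 = (genHistAux Td2 Od2 q s2 k).1 := by
              rw [genHistAux_drop Td Od q s1 hk', genHistAux_drop Td2 Od2 q s2 hk', ih htm' q]
            have hq : qOf as (Od2 s2, (genHistAux Td2 Od2 q s2 k).1)
                = q (Od2 s2, (genHistAux Td2 Od2 q s2 k).1) := by
              show as (genHistAux Td2 Od2 q s2 k).1.length = _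
              rw [genHistAux_length, has]
              show q (Od s1, (genHistAux Td Od q s1 k).1) = _
              rw [hOd, hl]
            rw [hq]
        exact sub (t+1) le_rfl
      calc (genHistAux Td Od q s1 (t+1)).1
          = (genHistAux Td Od (qOf as) s1 (t+1)).1 := by rw [e1]
        _ = (genHistAux Td2 Od2 (qOf as) s2 (t+1)).1 := e2
        _ = (genHistAux Td2 Od2 q s2 (t+1)).1 := by rw [e3]
  intro q
  show (Od s1, (genHistAux Td Od q s1 m).1) = (Od2 s2, (genHistAux Td2 Od2 q s2 m).1)
  rw [hOd, main m le_rfl q]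

/-- The actions of a (reverse-chronological) history as a function of time. -/
def actsOf (a0 : A) : List (A × O) → ℕ → A
  | [] => fun _ => a0
  | (a, _) :: rest => fun k => if k = rest.length then a else actsOf a0 rest k

theorem actsOf_suffix (a0 : A) {a : A} {o : O} {rest : List (A × O)} :
    ∀ {l' : List (A × O)}, ((a, o) :: rest) <:+ l' → actsOf a0 l' rest.length = a := by
  intro l' h
  induction l' with
  | nil => exact absurd (List.eq_nil_of_suffix_nil h) (by simp)
  | cons y l'' ih =>
    obtain ⟨b, o'⟩ := y
    rcases List.suffix_cons_iff.mp h with h' | h'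
    · obtain ⟨h1, h2⟩ := (List.cons_eq_cons).mp h'.symm
      have hb : b = a := ((Prod.mk.injEq _ _ _ _).mp h1).1
      subst h2; subst hb
      simp [actsOf]
    · have hlt : rest.length < l''.length := by
        have := h'.length_le
        simp only [List.length_cons] at this; omega
      simp only [actsOf]
      rw [if_neg (by omega : ¬ rest.length = l''.length)]
      exact ih h' 

theorem follows_actsOf (a0 : A) (o0 : O) :
    ∀ {l l' : List (A × O)}, l <:+ l' → Follows (qOf (actsOf a0 l')) o0 l := by
  intro l
  induction l with
  | nil => intro l' _; trivial
  | cons x rest ih =>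
    obtain ⟨a, o⟩ := x
    intro l' h
    refine ⟨ih ((List.suffix_cons (a, o) rest).trans h), ?_⟩
    show actsOf a0 l' rest.length = a
    exact actsOf_suffix a0 h

/-- The consistency predicate only depends on the behaviour function of the state. -/
theorem consist_iff_beh (a0 : A) (Td : S → A → S) (Od : S → O) (m : ℕ) (s : S)
    (o0 : O) (l : List (A × O)) (hl : l.length ≤ m) :
    Consist Td Od s o0 l
      ↔ ((genHist Td Od (qOf (actsOf a0 l)) s m).1 = o0 ∧
          ((genHist Td Od (qOf (actsOf a0 l)) s m).2).drop (m - l.length) = l) := by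
  have hf : Follows (qOf (actsOf a0 l)) o0 l := follows_actsOf a0 o0 (List.suffix_refl l)
  constructor
  · intro hc
    obtain ⟨h1, h2⟩ := (cons_follows_iff Td Od (qOf (actsOf a0 l)) s o0 l).mp ⟨hc, hf⟩
    refine ⟨h1, ?_⟩
    show ((genHistAux Td Od (qOf (actsOf a0 l)) s m).1).drop (m - l.length) = l
    rw [← genHistAux_drop Td Od (qOf (actsOf a0 l)) s hl]
    exact h2
  · rintro ⟨h1, h2⟩
    refine ((cons_follows_iff Td Od (qOf (actsOf a0 l)) s o0 l).mpr ⟨h1, ?_⟩).1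
    rw [genHistAux_drop Td Od (qOf (actsOf a0 l)) s hl]
    exact h2

set_option maxHeartbeats 1000000 in
theorem massC_eq [Fintype S] [DecidableEq S] [Fintype S2] [DecidableEq S2]
    [Fintype A] [DecidableEq A] [Fintype O] [Nonempty A]
    (μ1 : Env S A O) (μ2 : Env S2 A O)
    (Td1 : S → A → S) (Od1 : S → O)
    (hT1 : ∀ s a s'', μ1.T s a s'' = @ite ℝ (s'' = Td1 s a) (Classical.propDecidable _) 1 0)
    (hO1 : ∀ s o', μ1.Obs s o' = @ite ℝ (o' = Od1 s) (Classical.propDecidable _) 1 0)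
    (Td2 : S2 → A → S2) (Od2 : S2 → O)
    (hT2 : ∀ s a s'', μ2.T s a s'' = @ite ℝ (s'' = Td2 s a) (Classical.propDecidable _) 1 0)
    (hO2 : ∀ s o', μ2.Obs s o' = @ite ℝ (o' = Od2 s) (Classical.propDecidable _) 1 0)
    (m : ℕ) (hce : MCounterEquiv μ1 μ2 m) (h : Hist A O) (hl : h.2.length ≤ m) :
    massC μ1 Td1 Od1 h = massC μ2 Td2 Od2 h := by
  have key := hce 1 (fun _ => h) (fun _ => (unifPol : Policy A O)) (fun _ => hl)
  rw [ce_sum_det μ1 Td1 Od1 hT1 hO1 m 1 (fun _ => h)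
      (fun _ => (unifPol : Policy A O)) (fun _ => hl),
    ce_sum_det μ2 Td2 Od2 hT2 hO2 m 1 (fun _ => h)
      (fun _ => (unifPol : Policy A O)) (fun _ => hl)] at key
  simp only [Fin.prod_univ_one] at key
  have hA : 0 < actProb (unifPol : Policy A O) h.1 h.2 := actProb_unif_pos h.1 h.2
  have e1 : ∀ {σ : Type} [Fintype σ] (μ : Env σ A O) (Td : σ → A → σ) (Od : σ → O),
      (∑ s0, μ.T0 s0 * (actProb (unifPol : Policy A O) h.1 h.2 *
          if Consist Td Od s0 h.1 h.2 then 1 else 0))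
        = actProb (unifPol : Policy A O) h.1 h.2 * massC μ Td Od h := by
    intro σ _ μ Td Od
    rw [massC, Finset.mul_sum]
    exact Finset.sum_congr rfl fun s0 _ => by ring
  rw [e1 μ1 Td1 Od1, e1 μ2 Td2 Od2] at key
  exact mul_left_cancel₀ hA.ne' key

noncomputable def extV [Nonempty A] (m : ℕ) (v : Fin m → A) : ℕ → A :=
  fun k => if hk : k < m then v ⟨k, hk⟩ else Classical.arbitrary A

set_option maxHeartbeats 1000000 in
theorem fiber_mass_eq [Fintype S] [DecidableEq S] [Fintype S2] [DecidableEq S2]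
    [Fintype A] [DecidableEq A] [Fintype O] [Nonempty A]
    (μ1 : Env S A O) (μ2 : Env S2 A O)
    (Td1 : S → A → S) (Od1 : S → O)
    (hT1 : ∀ s a s'', μ1.T s a s'' = @ite ℝ (s'' = Td1 s a) (Classical.propDecidable _) 1 0)
    (hO1 : ∀ s o', μ1.Obs s o' = @ite ℝ (o' = Od1 s) (Classical.propDecidable _) 1 0)
    (Td2 : S2 → A → S2) (Od2 : S2 → O)
    (hT2 : ∀ s a s'', μ2.T s a s'' = @ite ℝ (s'' = Td2 s a) (Classical.propDecidable _) 1 0)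
    (hO2 : ∀ s o', μ2.Obs s o' = @ite ℝ (o' = Od2 s) (Classical.propDecidable _) 1 0)
    (m : ℕ) (hce : MCounterEquiv μ1 μ2 m)
    (β : (ℕ → A) → Hist A O)
    (hβlen : ∀ as, (β as).2.length = m)
    (hβres : ∀ as as', (∀ k < m, as k = as' k) → β as = β as') :
    (∑ s0 : S, μ1.T0 s0 *
        if (∀ as, genHist Td1 Od1 (qOf as) s0 m = β as) then 1 else 0)
      = ∑ s0 : S2, μ2.T0 s0 *
        if (∀ as, genHist Td2 Od2 (qOf as) s0 m = β as) then 1 else 0 := by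
  set n := Fintype.card (Fin m → A) with hn
  set e : Fin n ≃ (Fin m → A) := (Fintype.equivFin (Fin m → A)).symm with he
  have hlen : ∀ i : Fin n, ((fun i => β (extV m (e i))) i).2.length ≤ m :=
    fun i => le_of_eq (hβlen _)
  have key := hce n (fun i => β (extV m (e i))) (fun i => detPol (qOf (extV m (e i)))) hlen
  rw [ce_sum_det μ1 Td1 Od1 hT1 hO1 m n (fun i => β (extV m (e i)))
      (fun i => detPol (qOf (extV m (e i)))) hlen,
    ce_sum_det μ2 Td2 Od2 hT2 hO2 m n (fun i => β (extV m (e i)))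
      (fun i => detPol (qOf (extV m (e i)))) hlen] at key
  beta_reduce at key
  have main : ∀ {σ : Type} (Td : σ → A → σ) (Od : σ → O) (s0 : σ),
      (∏ i : Fin n, (actProb (detPol (qOf (extV m (e i)))) (β (extV m (e i))).1
            (β (extV m (e i))).2 *
          if Consist Td Od s0 (β (extV m (e i))).1 (β (extV m (e i))).2 then 1 else 0))
        = if (∀ as, genHist Td Od (qOf as) s0 m = β as) then 1 else 0 := by
    intro σ Td Od s0
    calc (∏ i : Fin n, (actProb (detPol (qOf (extV m (e i)))) (β (extV m (e i))).1
            (β (extV m (e i))).2 *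
          if Consist Td Od s0 (β (extV m (e i))).1 (β (extV m (e i))).2 then 1 else 0))
        = ∏ i : Fin n, if (Follows (qOf (extV m (e i))) (β (extV m (e i))).1
              (β (extV m (e i))).2 ∧
            Consist Td Od s0 (β (extV m (e i))).1 (β (extV m (e i))).2) then (1:ℝ) else 0 :=
          Finset.prod_congr rfl fun i _ => by rw [actProb_detPol, ind_mul_ind]
      _ = if (∀ i : Fin n, Follows (qOf (extV m (e i))) (β (extV m (e i))).1
              (β (extV m (e i))).2 ∧
            Consist Td Od s0 (β (extV m (e i))).1 (β (extV m (e i))).2) then 1 else 0 :=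
          prod_ind _
      _ = if (∀ as, genHist Td Od (qOf as) s0 m = β as) then 1 else 0 := by
          refine if_congr ?_ rfl rfl
          constructor
          · intro hAll as
            have hi := hAll (e.symm (fun k : Fin m => as k))
            rw [Equiv.apply_symm_apply] at hi
            obtain ⟨hF, hC⟩ := hi
            obtain ⟨hOds, hList⟩ :=
              (cons_follows_iff Td Od (qOf (extV m (fun k : Fin m => as k))) s0
                (β (extV m (fun k : Fin m => as k))).1
                (β (extV m (fun k : Fin m => as k))).2).mp ⟨hC, hF⟩
            rw [hβlen] at hList
            have hgen : genHist Td Od (qOf (extV m (fun k : Fin m => as k))) s0 m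
                = β (extV m (fun k : Fin m => as k)) := by
              show (Od s0, (genHistAux Td Od (qOf (extV m (fun k : Fin m => as k))) s0 m).1)
                  = β (extV m (fun k : Fin m => as k))
              rw [hOds, hList]
            have hagree : ∀ k, k < m → (extV m (fun k : Fin m => as k)) k = as k := by
              intro k hk
              rw [extV, dif_pos hk]
            calc genHist Td Od (qOf as) s0 m
                = genHist Td Od (qOf (extV m (fun k : Fin m => as k))) s0 m := by
                  show (Od s0, (genHistAux Td Od (qOf as) s0 m).1)
                      = (Od s0, (genHistAux Td Od
                          (qOf (extV m (fun k : Fin m => as k))) s0 m).1)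
                  rw [genHistAux_qOf_congr Td Od s0 m (fun k hk => (hagree k hk).symm)]
              _ = β (extV m (fun k : Fin m => as k)) := hgen
              _ = β as := hβres _ _ hagree
          · intro hAll i
            have hgen := hAll (extV m (e i))
            have hOds : Od s0 = (β (extV m (e i))).1 := congrArg Prod.fst hgen
            have hList : (genHistAux Td Od (qOf (extV m (e i))) s0
                ((β (extV m (e i))).2.length)).1 = (β (extV m (e i))).2 := by
              rw [hβlen]
              exact congrArg Prod.snd hgen
            have hcf := (cons_follows_iff Td Od (qOf (extV m (e i))) s0
                (β (extV m (e i))).1 (β (extV m (e i))).2).mpr ⟨hOds, hList⟩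
            exact ⟨hcf.2, hcf.1⟩
  calc (∑ s0 : S, μ1.T0 s0 *
        if (∀ as, genHist Td1 Od1 (qOf as) s0 m = β as) then 1 else 0)
      = ∑ s0 : S, μ1.T0 s0 *
          ∏ i : Fin n, (actProb (detPol (qOf (extV m (e i)))) (β (extV m (e i))).1
              (β (extV m (e i))).2 *
            if Consist Td1 Od1 s0 (β (extV m (e i))).1 (β (extV m (e i))).2 then 1 else 0) :=
        Finset.sum_congr rfl fun s0 _ => by rw [main Td1 Od1 s0]
    _ = ∑ s0 : S2, μ2.T0 s0 *
          ∏ i : Fin n, (actProb (detPol (qOf (extV m (e i)))) (β (extV m (e i))).1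
              (β (extV m (e i))).2 *
            if Consist Td2 Od2 s0 (β (extV m (e i))).1 (β (extV m (e i))).2 then 1 else 0) :=
        key
    _ = ∑ s0 : S2, μ2.T0 s0 *
          if (∀ as, genHist Td2 Od2 (qOf as) s0 m = β as) then 1 else 0 :=
        Finset.sum_congr rfl fun s0 _ => by rw [main Td2 Od2 s0]

theorem beh_len (Td : S → A → S) (Od : S → O) (m : ℕ) (s : S) (as : ℕ → A) :
    (genHist Td Od (qOf as) s m).2.length = m :=
  genHistAux_length Td Od (qOf as) s m

theorem beh_res (Td : S → A → S) (Od : S → O) (m : ℕ) (s : S) (as as' : ℕ → A)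
    (hk : ∀ k < m, as k = as' k) :
    genHist Td Od (qOf as) s m = genHist Td Od (qOf as') s m := by
  show (Od s, (genHistAux Td Od (qOf as) s m).1) = (Od s, (genHistAux Td Od (qOf as') s m).1)
  rw [genHistAux_qOf_congr Td Od s m hk]

theorem filter_sum_eq [Fintype S] (β : (ℕ → A) → Hist A O)
    (w : S → ℝ) (g : S → (ℕ → A) → Hist A O) :
    (∑ s0 ∈ Finset.univ.filter (fun s0 => g s0 = β), w s0)
      = ∑ s0, w s0 * (if (∀ as, g s0 as = β as) then 1 else 0) := by
  rw [Finset.sum_filter]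
  refine Finset.sum_congr rfl fun s0 _ => ?_
  by_cases hgg : g s0 = β
  · rw [if_pos hgg, if_pos (fun as => congrFun hgg as), mul_one]
  · rw [if_neg hgg, if_neg (fun hall => hgg (funext hall)), mul_zero]

end PLU

/-- **universality.** If `P` is a pure learning process on `μ` and `μ*` is
any deterministic environment `m`-counterfactually equivalent to `μ`, then there exist
constants `p_{s*} ∈ [0,1]` with `P(h) = ∑_{s*} p_{s*} μ*(s₀ = s* | h)` for all histories
of length `≤ m`: every deterministic `m`-counterfactually equivalent environment realizes
every pure learning process. -/
theorem pureLearning_universality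
    {S Sstar A O : Type} [Fintype S] [DecidableEq S] [Fintype Sstar] [DecidableEq Sstar]
    [Fintype A] [DecidableEq A] [Fintype O]
    (μ : Env S A O) (m : ℕ) (P : Hist A O → ℝ)
    (hP : IsPureLearning μ m P)
    (μstar : Env Sstar A O) (hdet : IsDetEnv μstar) (hce : MCounterEquiv μ μstar m) :
    ∃ p : Sstar → ℝ, (∀ sstar, p sstar ∈ Set.Icc (0 : ℝ) 1) ∧
      ∀ h : Hist A O, h.2.length ≤ m → P h = ∑ sstar, p sstar * posterior μstar h sstar := by
  classical
  obtain ⟨hP01, S', iS'f, iS'd, μ', p', hdet', hce', hp', hPeq⟩ := hP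
  -- degenerate case: no observations
  by_cases hO : Nonempty O
  swap
  · exact ⟨fun _ => 0, fun _ => ⟨le_rfl, zero_le_one⟩, fun h _ => absurd ⟨h.1⟩ hO⟩
  -- degenerate case: no actions, hence no policies
  by_cases hA : Nonempty A
  swap
  · haveI : IsEmpty A := not_nonempty_iff.mp hA
    have hno : ∀ {σ : Type} [Fintype σ] (μ0 : Env σ A O) (h : Hist A O),
        ¬∃ π : Policy A O, 0 < histProb μ0 π h := by
      rintro σ _ μ0 h ⟨π, -⟩
      have h1 := π.sum_one (Classical.arbitrary O, [])
      rw [Finset.univ_eq_empty, Finset.sum_empty] at h1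
      exact zero_ne_one h1
    refine ⟨fun _ => 0, fun _ => ⟨le_rfl, zero_le_one⟩, fun h hl => ?_⟩
    rw [hPeq h hl]
    simp [PLU.posterior_zero _ h _ (hno μ' h), PLU.posterior_zero _ h _ (hno μstar h)]
  -- main case
  choose Tds hTs using hdet.1
  choose Ods hOs using hdet.2
  choose Td' hT' using hdet'.1
  choose Od' hO' using hdet'.2
  have hce2 : MCounterEquiv μ' μstar m := fun n hs πs hl =>
    (hce' n hs πs hl).symm.trans (hce n hs πs hl)
  set a0 := Classical.arbitrary A with ha0
  -- fiber masses and the transported constants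
  set M : Sstar → ℝ := fun st => ∑ s0 : S', μ'.T0 s0 *
      (if (∀ as, genHist Td' Od' (PLU.qOf as) s0 m
          = genHist Tds Ods (PLU.qOf as) st m) then 1 else 0) with hM
  set N : Sstar → ℝ := fun st => ∑ s0 : S', (p' s0 * μ'.T0 s0) *
      (if (∀ as, genHist Td' Od' (PLU.qOf as) s0 m
          = genHist Tds Ods (PLU.qOf as) st m) then 1 else 0) with hN
  set p : Sstar → ℝ := fun st => if M st = 0 then 0 else N st / M st with hp
  have hind_nonneg : ∀ P : Prop, (0:ℝ) ≤ if P then 1 else 0 := fun P => by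
    by_cases hh : P <;> simp [hh]
  have hM_nonneg : ∀ st, 0 ≤ M st := fun st =>
    Finset.sum_nonneg fun s0 _ => mul_nonneg (μ'.T0_nonneg s0) (hind_nonneg _)
  have hN_nonneg : ∀ st, 0 ≤ N st := fun st =>
    Finset.sum_nonneg fun s0 _ =>
      mul_nonneg (mul_nonneg (hp' s0).1 (μ'.T0_nonneg s0)) (hind_nonneg _)
  have hN_le_M : ∀ st, N st ≤ M st := fun st =>
    Finset.sum_le_sum fun s0 _ => by
      refine mul_le_mul_of_nonneg_right ?_ (hind_nonneg _)
      calc p' s0 * μ'.T0 s0 ≤ 1 * μ'.T0 s0 :=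
            mul_le_mul_of_nonneg_right (hp' s0).2 (μ'.T0_nonneg s0)
        _ = μ'.T0 s0 := one_mul _
  have hp01 : ∀ st, p st ∈ Set.Icc (0:ℝ) 1 := by
    intro st
    rw [hp]
    dsimp only
    by_cases hM0 : M st = 0
    · rw [if_pos hM0]; exact ⟨le_rfl, zero_le_one⟩
    · rw [if_neg hM0]
      have hMpos : 0 < M st := (hM_nonneg st).lt_of_ne (Ne.symm hM0)
      exact ⟨div_nonneg (hN_nonneg st) hMpos.le, (div_le_one hMpos).mpr (hN_le_M st)⟩
  refine ⟨p, hp01, fun h hl => ?_⟩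
  rw [hPeq h hl]
  -- equality of histories' masses
  have hZeq : PLU.massC μ' Td' Od' h = PLU.massC μstar Tds Ods h :=
    PLU.massC_eq μ' μstar Td' Od' hT' hO' Tds Ods hTs hOs m hce2 h hl
  by_cases hz : PLU.massC μstar Tds Ods h = 0
  · have h1 : ∀ st, posterior μstar h st = 0 := fun st =>
      PLU.posterior_zero _ h _ (fun hex => by
        have hpos := (PLU.exists_pos_iff_massC μstar Tds Ods hTs hOs h).1 hex
        rw [hz] at hpos
        exact lt_irrefl 0 hpos)
    have h2 : ∀ s0, posterior μ' h s0 = 0 := fun s0 =>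
      PLU.posterior_zero _ h _ (fun hex => by
        have hpos := (PLU.exists_pos_iff_massC μ' Td' Od' hT' hO' h).1 hex
        rw [hZeq, hz] at hpos
        exact lt_irrefl 0 hpos)
    simp [h1, h2]
  · have hmpos : 0 < PLU.massC μstar Tds Ods h :=
      (PLU.massC_nonneg μstar Tds Ods h).lt_of_ne (Ne.symm hz)
    have hmpos' : 0 < PLU.massC μ' Td' Od' h := by rw [hZeq]; exact hmpos
    have hpost2 : ∀ st, posterior μstar h st
        = μstar.T0 st * (if PLU.Consist Tds Ods st h.1 h.2 then 1 else 0)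
            / PLU.massC μstar Tds Ods h :=
      fun st => PLU.posterior_det μstar Tds Ods hTs hOs h hmpos st
    have hpost1 : ∀ s0, posterior μ' h s0
        = μ'.T0 s0 * (if PLU.Consist Td' Od' s0 h.1 h.2 then 1 else 0)
            / PLU.massC μstar Tds Ods h :=
      fun s0 => by
        rw [PLU.posterior_det μ' Td' Od' hT' hO' h hmpos' s0, hZeq]
    simp only [hpost1, hpost2, ← mul_div_assoc]
    rw [← Finset.sum_div, ← Finset.sum_div]
    congr 1
    -- the heart of the matter
    set K : Finset ((ℕ → A) → Hist A O) :=
      Finset.univ.image (fun st : Sstar => fun as => genHist Tds Ods (PLU.qOf as) st m)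
      with hK
    set B2 : Finset ((ℕ → A) → Hist A O) :=
      (Finset.univ.image (fun s0 : S' => fun as => genHist Td' Od' (PLU.qOf as) s0 m)) ∪ K
      with hB2
    -- states of μ' whose behaviour is not matched by any state of μstar have mass 0
    have hout : ∀ s0 : S',
        (fun as => genHist Td' Od' (PLU.qOf as) s0 m) ∉ K → μ'.T0 s0 = 0 := by
      intro s0 hnot
      have htot1 : (1:ℝ) = ∑ s0 : S', μ'.T0 s0 := μ'.T0_sum.symm
      have htot2 : (1:ℝ) = ∑ s0 : S', μ'.T0 s0 *
          (if (fun as => genHist Td' Od' (PLU.qOf as) s0 m) ∈ K then 1 else 0) := by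
        calc (1:ℝ) = ∑ st : Sstar, μstar.T0 st := μstar.T0_sum.symm
          _ = ∑ β ∈ K, ∑ st ∈ Finset.univ.filter
                (fun st : Sstar => (fun as => genHist Tds Ods (PLU.qOf as) st m) = β),
                μstar.T0 st :=
            (Finset.sum_fiberwise_of_maps_to
              (fun st _ => Finset.mem_image_of_mem _ (Finset.mem_univ st)) _).symm
          _ = ∑ β ∈ K, ∑ s0 : S', μ'.T0 s0 *
                (if (∀ as, genHist Td' Od' (PLU.qOf as) s0 m = β as) then 1 else 0) := by
              refine Finset.sum_congr rfl fun β hβ => ?_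
              obtain ⟨st0, _, hst0⟩ := Finset.mem_image.mp hβ
              rw [PLU.filter_sum_eq β _ _]
              exact (PLU.fiber_mass_eq μ' μstar Td' Od' hT' hO' Tds Ods hTs hOs m hce2 β
                (fun as => by rw [← hst0]; exact PLU.beh_len Tds Ods m st0 as)
                (fun as as' hk => by rw [← hst0]; exact PLU.beh_res Tds Ods m st0 as as' hk)).symm
          _ = ∑ s0 : S', ∑ β ∈ K, μ'.T0 s0 *
                (if (∀ as, genHist Td' Od' (PLU.qOf as) s0 m = β as) then 1 else 0) :=
            Finset.sum_comm
          _ = ∑ s0 : S', μ'.T0 s0 *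
                (if (fun as => genHist Td' Od' (PLU.qOf as) s0 m) ∈ K then 1 else 0) := by
              refine Finset.sum_congr rfl fun s0 _ => ?_
              rw [← Finset.mul_sum]
              congr 1
              calc (∑ β ∈ K, if (∀ as, genHist Td' Od' (PLU.qOf as) s0 m = β as)
                      then (1:ℝ) else 0)
                  = ∑ β ∈ K, if (fun as => genHist Td' Od' (PLU.qOf as) s0 m) = β
                      then (1:ℝ) else 0 :=
                    Finset.sum_congr rfl fun β _ => if_congr
                      ⟨fun hall => funext hall, fun heq as => congrFun heq as⟩ rfl rfl
                _ = if (fun as => genHist Td' Od' (PLU.qOf as) s0 m) ∈ K then 1 else 0 :=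
                    Finset.sum_ite_eq K _ (fun _ => (1:ℝ))
      have hdiff : ∑ s0 : S', μ'.T0 s0 *
          (1 - if (fun as => genHist Td' Od' (PLU.qOf as) s0 m) ∈ K then 1 else 0) = 0 := by
        have := htot1.symm.trans htot2
        simp only [mul_sub, mul_one, Finset.sum_sub_distrib]
        linarith
      have hterm := (Finset.sum_eq_zero_iff_of_nonneg (fun s0 _ => by
          refine mul_nonneg (μ'.T0_nonneg s0) ?_
          by_cases hh : (fun as => genHist Td' Od' (PLU.qOf as) s0 m) ∈ K <;>
            simp [hh])).mp hdiff s0 (Finset.mem_univ s0)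
      rw [if_neg hnot] at hterm
      simpa using hterm
    -- fiberwise decomposition of both sums
    rw [← Finset.sum_fiberwise_of_maps_to
        (g := fun s0 : S' => fun as => genHist Td' Od' (PLU.qOf as) s0 m) (t := B2)
        (fun s0 _ => Finset.mem_union_left _
          (Finset.mem_image_of_mem _ (Finset.mem_univ s0)))
        (fun s0 => p' s0 * (μ'.T0 s0 * if PLU.Consist Td' Od' s0 h.1 h.2 then 1 else 0)),
      ← Finset.sum_fiberwise_of_maps_to
        (g := fun st : Sstar => fun as => genHist Tds Ods (PLU.qOf as) st m) (t := B2)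
        (fun st _ => Finset.mem_union_right _
          (Finset.mem_image_of_mem _ (Finset.mem_univ st)))
        (fun st => p st * (μstar.T0 st * if PLU.Consist Tds Ods st h.1 h.2 then 1 else 0))]
    refine Finset.sum_congr rfl fun β hβ => ?_
    -- whether the history is compatible with the behaviour β
    by_cases hq : ((β (PLU.actsOf a0 h.2)).1 = h.1 ∧
        ((β (PLU.actsOf a0 h.2)).2).drop (m - h.2.length) = h.2)
    swap
    · -- incompatible: both sides vanish
      have z1 : ∀ s0 ∈ Finset.univ.filter
          (fun s0 : S' => (fun as => genHist Td' Od' (PLU.qOf as) s0 m) = β),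
          p' s0 * (μ'.T0 s0 * if PLU.Consist Td' Od' s0 h.1 h.2 then 1 else 0) = 0 := by
        intro s0 hs0
        have hgb := (Finset.mem_filter.mp hs0).2
        have hnc : ¬ PLU.Consist Td' Od' s0 h.1 h.2 := fun hc => hq (by
          have hiff := (PLU.consist_iff_beh a0 Td' Od' m s0 h.1 h.2 hl).mp hc
          rwa [show genHist Td' Od' (PLU.qOf (PLU.actsOf a0 h.2)) s0 m
              = β (PLU.actsOf a0 h.2) from congrFun hgb _] at hiff)
        rw [if_neg hnc, mul_zero, mul_zero]
      have z2 : ∀ st ∈ Finset.univ.filter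
          (fun st : Sstar => (fun as => genHist Tds Ods (PLU.qOf as) st m) = β),
          p st * (μstar.T0 st * if PLU.Consist Tds Ods st h.1 h.2 then 1 else 0) = 0 := by
        intro st hst
        have hgb := (Finset.mem_filter.mp hst).2
        have hnc : ¬ PLU.Consist Tds Ods st h.1 h.2 := fun hc => hq (by
          have hiff := (PLU.consist_iff_beh a0 Tds Ods m st h.1 h.2 hl).mp hc
          rwa [show genHist Tds Ods (PLU.qOf (PLU.actsOf a0 h.2)) st m
              = β (PLU.actsOf a0 h.2) from congrFun hgb _] at hiff)
        rw [if_neg hnc, mul_zero, mul_zero]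
      rw [Finset.sum_eq_zero z1, Finset.sum_eq_zero z2]
    · -- compatible: the consistency indicators are 1 on both fibers
      have c1 : ∀ s0 ∈ Finset.univ.filter
          (fun s0 : S' => (fun as => genHist Td' Od' (PLU.qOf as) s0 m) = β),
          PLU.Consist Td' Od' s0 h.1 h.2 := by
        intro s0 hs0
        have hgb := (Finset.mem_filter.mp hs0).2
        refine (PLU.consist_iff_beh a0 Td' Od' m s0 h.1 h.2 hl).mpr ?_
        rw [show genHist Td' Od' (PLU.qOf (PLU.actsOf a0 h.2)) s0 m
            = β (PLU.actsOf a0 h.2) from congrFun hgb _]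
        exact hq
      have c2 : ∀ st ∈ Finset.univ.filter
          (fun st : Sstar => (fun as => genHist Tds Ods (PLU.qOf as) st m) = β),
          PLU.Consist Tds Ods st h.1 h.2 := by
        intro st hst
        have hgb := (Finset.mem_filter.mp hst).2
        refine (PLU.consist_iff_beh a0 Tds Ods m st h.1 h.2 hl).mpr ?_
        rw [show genHist Tds Ods (PLU.qOf (PLU.actsOf a0 h.2)) st m
            = β (PLU.actsOf a0 h.2) from congrFun hgb _]
        exact hq
      rw [Finset.sum_congr (rfl : Finset.univ.filter
          (fun s0 : S' => (fun as => genHist Td' Od' (PLU.qOf as) s0 m) = β) = _)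
          (fun s0 hs0 => by rw [if_pos (c1 s0 hs0), mul_one])]
      rw [Finset.sum_congr (rfl : Finset.univ.filter
          (fun st : Sstar => (fun as => genHist Tds Ods (PLU.qOf as) st m) = β) = _)
          (fun st hst => by rw [if_pos (c2 st hst), mul_one])]
      -- now compare the fiber sums using the fiber-mass identity
      by_cases hex : ∃ st0 : Sstar, (fun as => genHist Tds Ods (PLU.qOf as) st0 m) = β
      · obtain ⟨st0, hst0⟩ := hex
        -- common values on the β-fiber
        set Mβ : ℝ := ∑ s0 : S', μ'.T0 s0 *
            (if (∀ as, genHist Td' Od' (PLU.qOf as) s0 m = β as) then 1 else 0) with hMβ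
        set Nβ : ℝ := ∑ s0 : S', (p' s0 * μ'.T0 s0) *
            (if (∀ as, genHist Td' Od' (PLU.qOf as) s0 m = β as) then 1 else 0) with hNβ
        have hMst : ∀ st ∈ Finset.univ.filter
            (fun st : Sstar => (fun as => genHist Tds Ods (PLU.qOf as) st m) = β),
            M st = Mβ := by
          intro st hst
          have hgb := (Finset.mem_filter.mp hst).2
          rw [hM, hMβ]
          dsimp only
          refine Finset.sum_congr rfl fun s0 _ => ?_
          congr 1
          refine if_congr ?_ rfl rfl
          constructor
          · intro hall as; rw [hall as, show genHist Tds Ods (PLU.qOf as) st m = β as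
              from congrFun hgb as]
          · intro hall as; rw [hall as, ← show genHist Tds Ods (PLU.qOf as) st m = β as
              from congrFun hgb as]
        have hNst : ∀ st ∈ Finset.univ.filter
            (fun st : Sstar => (fun as => genHist Tds Ods (PLU.qOf as) st m) = β),
            N st = Nβ := by
          intro st hst
          have hgb := (Finset.mem_filter.mp hst).2
          rw [hN, hNβ]
          dsimp only
          refine Finset.sum_congr rfl fun s0 _ => ?_
          congr 1
          refine if_congr ?_ rfl rfl
          constructor
          · intro hall as; rw [hall as, show genHist Tds Ods (PLU.qOf as) st m = β as
              from congrFun hgb as]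
          · intro hall as; rw [hall as, ← show genHist Tds Ods (PLU.qOf as) st m = β as
              from congrFun hgb as]
        have hfm := PLU.fiber_mass_eq μ' μstar Td' Od' hT' hO' Tds Ods hTs hOs m hce2 β
          (fun as => by rw [← hst0]; exact PLU.beh_len Tds Ods m st0 as)
          (fun as as' hk => by rw [← hst0]; exact PLU.beh_res Tds Ods m st0 as as' hk)
        -- LHS is Nβ
        rw [PLU.filter_sum_eq β (fun s0 => p' s0 * μ'.T0 s0) _]
        -- RHS: pull out the common constant p st
        have hRHS : (∑ st ∈ Finset.univ.filter
            (fun st : Sstar => (fun as => genHist Tds Ods (PLU.qOf as) st m) = β),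
            p st * μstar.T0 st)
            = (if Mβ = 0 then 0 else Nβ / Mβ) *
              ∑ st ∈ Finset.univ.filter
                (fun st : Sstar => (fun as => genHist Tds Ods (PLU.qOf as) st m) = β),
                μstar.T0 st := by
          rw [Finset.mul_sum]
          refine Finset.sum_congr rfl fun st hst => ?_
          rw [hp]
          dsimp only
          rw [hMst st hst, hNst st hst]
        rw [hRHS, PLU.filter_sum_eq β (fun st => μstar.T0 st) _]
        rw [← hfm]
        by_cases hMβ0 : Mβ = 0
        · have hNβ_nonneg : 0 ≤ Nβ :=
            Finset.sum_nonneg fun s0 _ =>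
              mul_nonneg (mul_nonneg (hp' s0).1 (μ'.T0_nonneg s0)) (hind_nonneg _)
          have hNβ_le : Nβ ≤ Mβ :=
            Finset.sum_le_sum fun s0 _ => by
              refine mul_le_mul_of_nonneg_right ?_ (hind_nonneg _)
              calc p' s0 * μ'.T0 s0 ≤ 1 * μ'.T0 s0 :=
                    mul_le_mul_of_nonneg_right (hp' s0).2 (μ'.T0_nonneg s0)
                _ = μ'.T0 s0 := one_mul _
          have hNβ0 : Nβ = 0 := le_antisymm (hMβ0 ▸ hNβ_le) hNβ_nonneg
          rw [if_pos hMβ0, zero_mul, ← hNβ, hNβ0]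
        · rw [if_neg hMβ0, ← hMβ, div_mul_cancel₀ _ hMβ0, ← hNβ]
      · -- β is not a μstar-behaviour: both sides vanish
        have hempty : Finset.univ.filter
            (fun st : Sstar => (fun as => genHist Tds Ods (PLU.qOf as) st m) = β)
            = ∅ := by
          rw [Finset.filter_eq_empty_iff]
          intro st _
          exact fun heq => hex ⟨st, heq⟩
        rw [hempty, Finset.sum_empty]
        refine Finset.sum_eq_zero fun s0 hs0 => ?_
        have hgb := (Finset.mem_filter.mp hs0).2
        have hT0 : μ'.T0 s0 = 0 := by
          refine hout s0 fun hmem => ?_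
          obtain ⟨st0, _, hst0⟩ := Finset.mem_image.mp hmem
          exact hex ⟨st0, hst0.trans hgb⟩
        rw [hT0, mul_zero]
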